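/- Let y, z : ℤ → ℝ be sequences of positive reals satisfying the coupled q-Painlevé III recurrences y_{n+3} z_n (1/z_{n+2} + 1)(1/y_{n+1} + 1) = (y_{n+2} + 1)(z_{n+1} + 1) and z_{n+3} y_n (1/y_{n+2} + 1)(1/z_{n+1} + 1) = (z_{n+2} + 1)(y_{n+1} + 1) for all n ∈ ℤ. Define t_n := y_n z_n, u₀ := y_2 (1/z_1 + 1) / (z_0 (1/y_1 + 1)) and v₀ := z_2 (1/y_1 + 1) / (y_0 (1/z_1 + 1)). Then t_{n+2} = u₀ v₀ t_n for all n ∈ ℤ. -/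

import Mathlib

/-- For positive solutions of the coupled q-Painlevé III recurrences, the
quantity `t n := y n * z n` satisfies `t (n+2) = u₀ * v₀ * t n`, where
`u₀ := y 2 * (1/z 1 + 1) / (z 0 * (1/y 1 + 1))` and
`v₀ := z 2 * (1/y 1 + 1) / (y 0 * (1/z 1 + 1))`. -/
theorem qPIII_t_recursion
    (y z : ℤ → ℝ) (hy : ∀ n : ℤ, 0 < y n) (hz : ∀ n : ℤ, 0 < z n)
    (hrec₁ : ∀ n : ℤ,
      y (n + 3) * z n * (1 / z (n + 2) + 1) * (1 / y (n + 1) + 1) =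
        (y (n + 2) + 1) * (z (n + 1) + 1))
    (hrec₂ : ∀ n : ℤ,
      z (n + 3) * y n * (1 / y (n + 2) + 1) * (1 / z (n + 1) + 1) =
        (z (n + 2) + 1) * (y (n + 1) + 1))
    (u₀ v₀ : ℝ)
    (hu₀ : u₀ = y 2 * (1 / z 1 + 1) / (z 0 * (1 / y 1 + 1)))
    (hv₀ : v₀ = z 2 * (1 / y 1 + 1) / (y 0 * (1 / z 1 + 1)))
    (t : ℤ → ℝ) (ht : ∀ n : ℤ, t n = y n * z n) :
    ∀ n : ℤ, t (n + 2) = u₀ * v₀ * t n := by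
  have hyne : ∀ n : ℤ, y n ≠ 0 := fun n => (hy n).ne'
  have hzne : ∀ n : ℤ, z n ≠ 0 := fun n => (hz n).ne'
  have htpos : ∀ n : ℤ, 0 < t n := fun n => by rw [ht]; exact mul_pos (hy n) (hz n)
  have htne : ∀ n : ℤ, t n ≠ 0 := fun n => (htpos n).ne'
  have hApos : ∀ n : ℤ, (0:ℝ) < 1 / y n + 1 := fun n => by
    have := hy n; positivity
  have hBpos : ∀ n : ℤ, (0:ℝ) < 1 / z n + 1 := fun n => by
    have := hz n; positivity
  -- the key multiplicative relation
  have key : ∀ n : ℤ, t (n + 3) * t n = t (n + 2) * t (n + 1) := by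
    intro n
    have h1 := hrec₁ n
    have h2 := hrec₂ n
    have hx : ∀ x : ℝ, x ≠ 0 → x * (1 / x + 1) = x + 1 := by
      intro x hx; field_simp; ring
    have hprod : ((1 / z (n + 2) + 1) * (1 / y (n + 1) + 1) * (1 / y (n + 2) + 1)
        * (1 / z (n + 1) + 1)) ≠ 0 := by
      exact mul_ne_zero (mul_ne_zero (mul_ne_zero (hBpos _).ne' (hApos _).ne')
        (hApos _).ne') (hBpos _).ne'
    apply mul_right_cancel₀ hprod
    have e1 : t (n + 3) * t n * ((1 / z (n + 2) + 1) * (1 / y (n + 1) + 1)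
        * (1 / y (n + 2) + 1) * (1 / z (n + 1) + 1))
        = (y (n + 3) * z n * (1 / z (n + 2) + 1) * (1 / y (n + 1) + 1))
          * (z (n + 3) * y n * (1 / y (n + 2) + 1) * (1 / z (n + 1) + 1)) := by
      rw [ht, ht]; ring
    have e2 : t (n + 2) * t (n + 1) * ((1 / z (n + 2) + 1) * (1 / y (n + 1) + 1)
        * (1 / y (n + 2) + 1) * (1 / z (n + 1) + 1))
        = (y (n + 2) * (1 / y (n + 2) + 1)) * (z (n + 1) * (1 / z (n + 1) + 1))
          * ((z (n + 2) * (1 / z (n + 2) + 1)) * (y (n + 1) * (1 / y (n + 1) + 1))) := by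
      rw [ht, ht]; ring
    rw [e1, e2, h1, h2, hx _ (hyne (n + 2)), hx _ (hzne (n + 1)),
      hx _ (hzne (n + 2)), hx _ (hyne (n + 1))]
    try ring
  -- base case
  have huv : u₀ * v₀ = (y 2 * z 2) / (y 0 * z 0) := by
    rw [hu₀, hv₀, div_mul_div_comm,
      show y 2 * (1 / z 1 + 1) * (z 2 * (1 / y 1 + 1))
          = (y 2 * z 2) * ((1 / z 1 + 1) * (1 / y 1 + 1)) by ring,
      show z 0 * (1 / y 1 + 1) * (y 0 * (1 / z 1 + 1))
          = (y 0 * z 0) * ((1 / z 1 + 1) * (1 / y 1 + 1)) by ring,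
      mul_div_mul_right _ _ (mul_ne_zero (hBpos 1).ne' (hApos 1).ne')]
  have base0 : t 2 = u₀ * v₀ * t 0 := by
    rw [ht, ht, huv, div_mul_eq_mul_div,
      mul_div_assoc, div_self (mul_ne_zero (hyne 0) (hzne 0)), mul_one]
  intro n
  induction n using Int.induction_on with
  | zero => exact base0
  | succ k ih =>
      have hk := key k
      rw [show ((k : ℤ) + 1 + 2) = k + 3 by ring]
      rw [ih] at hk
      apply mul_right_cancel₀ (htne k)
      linear_combination hk
  | pred k ih =>
      have hk := key (-k - 1)
      rw [show ((-k : ℤ) - 1 + 3) = -k + 2 by ring,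
        show ((-k : ℤ) - 1 + 2) = -k + 1 by ring,
        show ((-k : ℤ) - 1 + 1) = -k by ring, ih] at hk
      rw [show ((-(k:ℤ)) - 1 + 2) = -k + 1 by ring]
      apply mul_right_cancel₀ (htne (-k))
      linear_combination -hk
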